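/- Let T be a balanced tree with k levels (k ≥ 2) and L its graph Laplacian. If f is a stratified function on the vertices with Lf = λf for some real λ and f(root) = 0, then f is identically zero. -/

import Mathlib

open scoped Classical

/-- Vertices of the balanced tree with `k` levels and branching sequence `c`:
a vertex at level `l` (`0 ≤ l ≤ k-1`) is a function assigning to each `i < l` a
label in `Fin (c i)` (the label of the level-`(i+1)` ancestor among its siblings). -/
abbrev BTVert (k : ℕ) (c : ℕ → ℕ) : Type := Σ l : Fin k, ∀ i : Fin l.val, Fin (c i.val)

/-- `p` is the parent of `v` in the balanced tree. -/
def IsParentOf {k : ℕ} {c : ℕ → ℕ} (p v : BTVert k c) : Prop :=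
  ∃ h : p.1.val + 1 = v.1.val,
    ∀ i : Fin p.1.val, v.2 ⟨i.val, by have := i.isLt; omega⟩ = p.2 i

/-- The balanced tree as a simple graph: each non-root vertex is adjacent to its parent. -/
def btGraph (k : ℕ) (c : ℕ → ℕ) : SimpleGraph (BTVert k c) where
  Adj u v := IsParentOf u v ∨ IsParentOf v u
  symm := ⟨fun u v h => h.symm⟩
  loopless := ⟨fun v h => by
    rcases h with ⟨h, -⟩ | ⟨h, -⟩ <;> omega⟩

/-- The root (the unique vertex at level 0). -/
def btRoot (k : ℕ) (c : ℕ → ℕ) (hk : 0 < k) : BTVert k c :=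
  ⟨⟨0, hk⟩, fun i => i.elim0⟩

/-- `u` belongs to the maximal subtree rooted at `v` (`u` is `v` or a descendant of `v`). -/
def InSubtree {k : ℕ} {c : ℕ → ℕ} (v u : BTVert k c) : Prop :=
  ∃ h : v.1.val ≤ u.1.val,
    ∀ i : Fin v.1.val, u.2 ⟨i.val, by have := i.isLt; omega⟩ = v.2 i

/-- A function on the vertices is stratified if it only depends on the level. -/
def Stratified {k : ℕ} {c : ℕ → ℕ} (f : BTVert k c → ℝ) : Prop :=
  ∀ u v : BTVert k c, u.1 = v.1 → f u = f v

/-- Number of vertices at level `l`: `n(l) = c(0) ⋯ c(l-1)`. -/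
def nlev (c : ℕ → ℕ) (l : ℕ) : ℕ := ∏ i ∈ Finset.range l, c i

/-- The common degree `d(l)` of the vertices at level `l`. -/
def branchDeg (k : ℕ) (c : ℕ → ℕ) (l : ℕ) : ℕ :=
  if l = 0 then c 0 else if l = k - 1 then 1 else c l + 1

/-- The symmetric tridiagonal matrix `T^{(l0)}` with diagonal `d(l0), …, d(k-1)` and
off-diagonal `√c(l0), …, √c(k-2)`. -/
noncomputable def matT (k : ℕ) (c : ℕ → ℕ) (l0 : ℕ) :
    Matrix (Fin (k - l0)) (Fin (k - l0)) ℝ := fun i j =>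
  if i = j then (branchDeg k c (l0 + i.val) : ℝ)
  else if i.val + 1 = j.val then Real.sqrt (c (l0 + i.val))
  else if j.val + 1 = i.val then Real.sqrt (c (l0 + j.val))
  else 0

/-- The tridiagonal matrix `S^{(l0)}` with diagonal `d(l0), …, d(k-1)`, subdiagonal
entries `-1` and superdiagonal entries `-c(l0), …, -c(k-2)`. -/
def matS (k : ℕ) (c : ℕ → ℕ) (l0 : ℕ) :
    Matrix (Fin (k - l0)) (Fin (k - l0)) ℝ := fun i j =>
  if i = j then (branchDeg k c (l0 + i.val) : ℝ)
  else if i.val + 1 = j.val then -(c (l0 + i.val) : ℝ)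
  else if j.val + 1 = i.val then -1
  else 0

/-- `lam` is an eigenvalue of the matrix `A`. -/
def IsEigenvalue {V : Type*} [Fintype V] (A : Matrix V V ℝ) (lam : ℝ) : Prop :=
  ∃ f : V → ℝ, f ≠ 0 ∧ A.mulVec f = lam • f

/-- The (geometric) multiplicity of `lam` as an eigenvalue of `A`. -/
noncomputable def eigMult {V : Type*} [Fintype V] (A : Matrix V V ℝ) (lam : ℝ) : ℕ :=
  Module.finrank ℝ
    ↥(LinearMap.ker (A.mulVecLin - lam • (LinearMap.id : (V → ℝ) →ₗ[ℝ] (V → ℝ))))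

/-- The Dirichlet Laplacian on a subset `Ω` of the vertices of the balanced tree:
the principal submatrix of the Laplacian with rows and columns indexed by `Ω`. -/
noncomputable def dirichletLap (k : ℕ) (c : ℕ → ℕ) (Ω : Set (BTVert k c)) :
    Matrix Ω Ω ℝ := fun u v => (btGraph k c).lapMatrix ℝ u.1 v.1

/-- a stratified Laplacian eigenfunction vanishing at the root is identically
zero. -/
theorem stratified_eigenfunction_vanishing_at_root (k : ℕ) (hk : 2 ≤ k) (c : ℕ → ℕ)
    (hc : ∀ l, l ≤ k - 2 → 1 ≤ c l) (lam : ℝ) (f : BTVert k c → ℝ) (hstrat : Stratified f)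
    (hf : ((btGraph k c).lapMatrix ℝ).mulVec f = lam • f)
    (hroot : f (btRoot k c (by omega)) = 0) :
    f = 0 := by
  suffices h : ∀ n, ∀ u : BTVert k c, u.1.val = n → f u = 0 by
    funext u; exact h u.1.val u rfl
  intro n
  induction n using Nat.strong_induction_on with
  | _ n ih =>
    intro u hu
    match n, ih, hu with
    | 0, _, hu =>
      have h0 : u.1 = (btRoot k c (by omega)).1 := Fin.ext (by simpa [btRoot] using hu)
      rw [hstrat u _ h0, hroot]
    | (m+1), ih, hu =>
      have hmk : m + 1 < k := hu ▸ u.1.isLt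
      -- the parent of u
      set p : BTVert k c :=
        ⟨⟨m, by omega⟩, fun i => u.2 ⟨i.val, by have h : i.val < m := i.isLt; omega⟩⟩ with hp
      have hpm : p.1.val = m := rfl
      have hpu : IsParentOf p u := ⟨by omega, fun i => rfl⟩
      have hfp : f p = 0 := ih m (by omega) p rfl
      -- eigen-equation at p
      have heq := congrFun hf p
      rw [SimpleGraph.lapMatrix_mulVec_apply] at heq
      have hsum : ∑ v ∈ (btGraph k c).neighborFinset p, f v = 0 := by
        have : (lam • f) p = 0 := by simp [hfp]
        rw [this, hfp, mul_zero, zero_sub, neg_eq_zero] at heq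
        exact heq
      -- rewrite the neighbor sum
      have hterm : ∀ v : BTVert k c,
          (if (btGraph k c).Adj p v then f v else 0)
            = (if IsParentOf p v then (1:ℝ) else 0) * f u := by
        intro v
        by_cases h1 : IsParentOf p v
        · have hadj : (btGraph k c).Adj p v := by exact Or.inl h1
          rw [if_pos hadj, if_pos h1, one_mul]
          obtain ⟨hh, -⟩ := h1
          exact hstrat v u (Fin.ext (by omega))
        · rw [if_neg h1, zero_mul]
          by_cases h2 : IsParentOf v p
          · have hadj : (btGraph k c).Adj p v := by exact Or.inr h2
            rw [if_pos hadj]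
            obtain ⟨hh, -⟩ := h2
            exact ih v.1.val (by omega) v rfl
          · have hnadj : ¬ (btGraph k c).Adj p v := by
              rintro (h | h); exacts [h1 h, h2 h]
            rw [if_neg hnadj]
      have hsum' : ∑ v : BTVert k c, (if (btGraph k c).Adj p v then f v else 0) = 0 := by
        rw [← Finset.sum_filter, ← SimpleGraph.neighborFinset_eq_filter]
        exact hsum
      have hsum2 : (∑ v : BTVert k c, (if IsParentOf p v then (1:ℝ) else 0)) * f u = 0 :=
        calc (∑ v : BTVert k c, (if IsParentOf p v then (1:ℝ) else 0)) * f u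
            = ∑ v : BTVert k c, (if IsParentOf p v then (1:ℝ) else 0) * f u :=
              Finset.sum_mul ..
          _ = ∑ v : BTVert k c, (if (btGraph k c).Adj p v then f v else 0) :=
              Finset.sum_congr rfl fun v _ => (hterm v).symm
          _ = 0 := hsum' 
      have hN : (1:ℝ) ≤ ∑ v : BTVert k c, (if IsParentOf p v then (1:ℝ) else 0) := by
        have := Finset.single_le_sum
          (f := fun v : BTVert k c => if IsParentOf p v then (1:ℝ) else 0)
          (fun v _ => by positivity) (Finset.mem_univ u)
        simpa [hpu] using this
      have hNne : (∑ v : BTVert k c, (if IsParentOf p v then (1:ℝ) else 0)) ≠ 0 := by linarith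
      exact (mul_eq_zero.mp hsum2).resolve_left hNne
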